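/- Let V be a vector space over ℚ, let g and s be ℚ-linear endomorphisms of V with g ∘ s = s ∘ g, g ∘ g = id and s^{2n} = id for a fixed integer n ≥ 1, let φ : V → ℚ be ℚ-linear, and let q ∈ ℚ. Suppose v ∈ V satisfies g(s^{2n−1}(v)) = −v. Then (q + 1) · ∑_{i=0}^{2n−1} qⁱ · φ( gⁱ( s^{2n−i}( g(v) ) ) ) = −(q^{2n} − 1) · φ(g(v)). -/

import Mathlib

/-- Computation `K_α(β) = −⟨β, α∨⟩·(q^{2n}−1)/(q+1)` for roots of the Levi in the
Hasse-type situation, abstracted: `g` is an involution, `s^{2n} = id`, and the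
Hasse-type condition reads `g(s^{2n−1}(v)) = −v`. -/
theorem stmt7 (V : Type*) [AddCommGroup V] [Module ℚ V]
    (g s : Module.End ℚ V) (hcomm : g * s = s * g) (hg : g * g = 1)
    (n : ℕ) (hn : 1 ≤ n) (hs : s ^ (2 * n) = 1)
    (φ : V →ₗ[ℚ] ℚ) (q : ℚ)
    (v : V) (hv : g ((s ^ (2 * n - 1)) v) = -v) :
    (q + 1) * ∑ i ∈ Finset.range (2 * n), q ^ i * φ ((g ^ i) ((s ^ (2 * n - i)) (g v)))
      = -((q ^ (2 * n) - 1) * φ (g v)) := by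
  have hsg : (s * (g * s ^ (2 * n - 1))) = g := by
    rw [← mul_assoc, ← hcomm, mul_assoc, ← pow_succ']
    have h : 2 * n - 1 + 1 = 2 * n := by omega
    rw [h, hs, mul_one]
  have hgv : g v = -(s v) := by
    calc g v = (s * (g * s ^ (2 * n - 1))) v := by rw [hsg]
    _ = s (g ((s ^ (2 * n - 1)) v)) := rfl
    _ = -(s v) := by rw [hv, map_neg]
  have hgg : ∀ w : V, g (g w) = w := by
    intro w
    have := congrArg (fun f : Module.End ℚ V => f w) hg
    simpa using this
  have hgsw : ∀ w : V, g (s w) = s (g w) := by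
    intro w
    have := congrArg (fun f : Module.End ℚ V => f w) hcomm
    simpa using this
  have hs2 : s (s v) = v := by
    have h : g (g v) = s (s v) := by
      rw [hgv, map_neg, hgsw, hgv, map_neg, neg_neg]
    rw [← h, hgg]
  have hev : ∀ m : ℕ, (s ^ (2 * m)) v = v := by
    intro m
    induction m with
    | zero => simp
    | succ m ih =>
      rw [show 2 * (m + 1) = 2 * m + 1 + 1 from by ring, pow_succ, pow_succ,
        Module.End.mul_apply, Module.End.mul_apply, hs2, ih]
  have hodd : ∀ m : ℕ, (s ^ (2 * m + 1)) v = s v := by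
    intro m
    rw [pow_succ', Module.End.mul_apply, hev]
  have hgev : ∀ m : ℕ, (g ^ (2 * m) : Module.End ℚ V) = 1 := by
    intro m
    induction m with
    | zero => simp
    | succ m ih =>
      rw [show 2 * (m + 1) = 2 * m + 2 from by ring, pow_add, ih, one_mul, pow_two, hg]
  have hterm : ∀ i ∈ Finset.range (2 * n),
      q ^ i * φ ((g ^ i) ((s ^ (2 * n - i)) (g v))) = -((-q) ^ i * φ (s v)) := by
    intro i hi
    rw [Finset.mem_range] at hi
    rcases Nat.even_or_odd i with ⟨j, hj⟩ | ⟨j, hj⟩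
    · have hn' : 2 * n - i = 2 * (n - j) := by omega
      have hsv : (s ^ (2 * n - i)) (g v) = -(s v) := by
        rw [hgv, map_neg, hn']
        congr 1
        have h1 : (s ^ (2 * (n - j))) (s v) = (s ^ (2 * (n - j) + 1)) v := by
          rw [pow_succ, Module.End.mul_apply]
        rw [h1, hodd]
      rw [hsv, show i = 2 * j from by omega, hgev, Module.End.one_apply, map_neg]
      have hq : (-q) ^ (2 * j) = q ^ (2 * j) := Even.neg_pow ⟨j, by ring⟩ q
      rw [hq]; ring
    · have hn' : 2 * n - i = 2 * (n - j - 1) + 1 := by omega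
      have hsv : (s ^ (2 * n - i)) (g v) = -v := by
        rw [hgv, map_neg, hn']
        have h1 : (s ^ (2 * (n - j - 1) + 1)) (s v) = (s ^ (2 * (n - j - 1) + 1 + 1)) v := by
          simp [pow_succ, Module.End.mul_apply, hs2]
        rw [h1, show 2 * (n - j - 1) + 1 + 1 = 2 * (n - j) from by omega, hev]
      have hgi : (g ^ i : Module.End ℚ V) = g := by
        rw [hj, pow_succ, hgev, one_mul]
      rw [hsv, hgi, map_neg, hgv, neg_neg]
      have hq : (-q) ^ i = -(q ^ i) := Odd.neg_pow ⟨j, hj⟩ q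
      rw [hq]; ring
  rw [Finset.sum_congr rfl hterm, hgv, map_neg]
  have hG := geom_sum_mul (-q) (2 * n)
  have hq2 : (-q) ^ (2 * n) = q ^ (2 * n) := Even.neg_pow ⟨n, by ring⟩ q
  rw [Finset.sum_neg_distrib, ← Finset.sum_mul]
  linear_combination φ (s v) * hG + φ (s v) * hq2
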